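/- Let K be a complete discrete valuation field of characteristic 0 with perfect residue field of characteristic p > 0, and let φ(T) = a₁T + a₂T² + ⋯ be an isogeny of formal groups over O_K of height 1. Then for every index m with p ∤ m, the coefficient a₁ divides a_m in O_K. -/

import Mathlib

/-- Data of a normalized discrete (additive) valuation on a field `K`:
`v : K → ℤ ∪ {∞}` with `v(x) = ∞ ↔ x = 0`, multiplicative, ultrametric and surjective
(so `K` is a discrete valuation field, `O_K = {v ≥ 0}`, `m_K = {v > 0}`). -/
structure DVF (K : Type) [Field K] where
  v : K → WithTop ℤ
  v_top_iff : ∀ x : K, v x = ⊤ ↔ x = 0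
  v_mul : ∀ x y : K, v (x * y) = v x + v y
  v_add : ∀ x y : K, min (v x) (v y) ≤ v (x + y)
  v_surj : ∀ n : ℤ, ∃ x : K, v x = (n : WithTop ℤ)

namespace DVF

variable {K : Type} [Field K] (V : DVF K)

/-- The sequence `s` converges to `L` in the valuation topology of `V`. -/
def Tendsto (s : ℕ → K) (L : K) : Prop :=
  ∀ N : ℤ, ∃ M : ℕ, ∀ m : ℕ, M ≤ m → (N : WithTop ℤ) ≤ V.v (s m - L)

/-- `K` is complete with respect to the valuation `V`: every Cauchy sequence converges. -/
def IsComplete : Prop :=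
  ∀ s : ℕ → K,
    (∀ N : ℤ, ∃ M : ℕ, ∀ m k : ℕ, M ≤ m → M ≤ k → (N : WithTop ℤ) ≤ V.v (s m - s k)) →
    ∃ L : K, V.Tendsto s L

/-- The residue field `O_K/m_K` (of characteristic `p`) is perfect:
every residue class is a `p`-th power. -/
def ResiduePerfect (p : ℕ) : Prop :=
  ∀ x : K, 0 ≤ V.v x → ∃ y : K, 0 ≤ V.v y ∧ 0 < V.v (x - y ^ p)

/-- The residue field `O_K/m_K` is finite. -/
def ResidueFinite : Prop :=
  ∃ S : Finset K, ∀ x : K, 0 ≤ V.v x → ∃ y ∈ S, 0 < V.v (x - y)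

/-- `K` is Henselian: simple roots of integral polynomials lift from the residue field. -/
def IsHenselian : Prop :=
  ∀ f : Polynomial K, (∀ i : ℕ, 0 ≤ V.v (f.coeff i)) →
    ∀ a : K, 0 ≤ V.v a → 0 < V.v (f.eval a) → V.v (f.derivative.eval a) = 0 →
      ∃ b : K, f.eval b = 0 ∧ 0 < V.v (b - a)

end DVF

/-- `y` is the value of the one-variable power series `φ` at `x` (limit of partial sums). -/
def PSEval {K : Type} [Field K] (V : DVF K) (φ : PowerSeries K) (x y : K) : Prop :=
  V.Tendsto (fun n => ∑ i ∈ Finset.range n, PowerSeries.coeff i φ * x ^ i) y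

/-- `z` is the value of the two-variable power series `F` at `(x, y)`. -/
def FEval {K : Type} [Field K] (V : DVF K) (F : MvPowerSeries (Fin 2) K) (x y z : K) : Prop :=
  V.Tendsto (fun n => ∑ i ∈ Finset.range n, ∑ j ∈ Finset.range n,
    MvPowerSeries.coeff (Finsupp.single 0 i + Finsupp.single 1 j) F * x ^ i * y ^ j) z

/-- A one-dimensional commutative formal group law `F(X,Y)` over the valuation ring `O_K`
(integral coefficients, `F ≡ X + Y` mod degree 2, commutative and associative;
associativity `F(F(X,Y),Z) = F(X,F(Y,Z))` is written out coefficientwise). -/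
structure FGL (K : Type) [Field K] (V : DVF K) where
  F : MvPowerSeries (Fin 2) K
  int_coeff : ∀ d : Fin 2 →₀ ℕ, 0 ≤ V.v (MvPowerSeries.coeff d F)
  const : MvPowerSeries.coeff 0 F = 0
  linX : MvPowerSeries.coeff (Finsupp.single 0 1) F = 1
  linY : MvPowerSeries.coeff (Finsupp.single 1 1) F = 1
  comm : ∀ d : Fin 2 →₀ ℕ,
    MvPowerSeries.coeff d F = MvPowerSeries.coeff (Finsupp.equivMapDomain (Equiv.swap 0 1) d) F
  assoc : ∀ i j l : ℕ,
    (∑ k ∈ Finset.range (i + j + 1),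
      MvPowerSeries.coeff (Finsupp.single 0 k + Finsupp.single 1 l) F *
        MvPowerSeries.coeff (Finsupp.single 0 i + Finsupp.single 1 j) (F ^ k)) =
    (∑ k ∈ Finset.range (j + l + 1),
      MvPowerSeries.coeff (Finsupp.single 0 i + Finsupp.single 1 k) F *
        MvPowerSeries.coeff (Finsupp.single 0 j + Finsupp.single 1 l) (F ^ k))

/-- An isogeny `φ : F → G` of formal groups over `O_K`: a nonzero integral power series
with `φ(0) = 0` and `φ(F(X,Y)) = G(φ(X),φ(Y))` (written out coefficientwise). -/
structure Isog {K : Type} [Field K] (V : DVF K) (Fg Gg : FGL K V) where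
  φ : PowerSeries K
  ne_zero : φ ≠ 0
  int_coeff : ∀ i : ℕ, 0 ≤ V.v (PowerSeries.coeff i φ)
  const : PowerSeries.coeff 0 φ = 0
  hom : ∀ i j : ℕ,
    (∑ k ∈ Finset.range (i + j + 1),
      PowerSeries.coeff k φ *
        MvPowerSeries.coeff (Finsupp.single 0 i + Finsupp.single 1 j) (Fg.F ^ k)) =
    (∑ k ∈ Finset.range (i + j + 1), ∑ l ∈ Finset.range (i + j + 1),
      MvPowerSeries.coeff (Finsupp.single 0 k + Finsupp.single 1 l) Gg.F *
        PowerSeries.coeff i (φ ^ k) * PowerSeries.coeff j (φ ^ l))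

/-- The power series `φ` has height `n`: `φ(T) ≡ ψ(T^{p^n}) (mod m_K)`
for some integral `ψ` with `v(ψ'(0)) = 0`. -/
def HasHeight {K : Type} [Field K] (V : DVF K) (p n : ℕ) (φ : PowerSeries K) : Prop :=
  ∃ ψ : PowerSeries K, (∀ i : ℕ, 0 ≤ V.v (PowerSeries.coeff i ψ)) ∧
    V.v (PowerSeries.coeff 1 ψ) = 0 ∧
    ∀ j : ℕ, 0 < V.v (PowerSeries.coeff j φ -
      (if p ^ n ∣ j then PowerSeries.coeff (j / p ^ n) ψ else 0))

namespace Stmt1Aux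

variable {K : Type} [Field K]

lemma vpos_add' {x y : WithTop ℤ} (hx : 0 ≤ x) (hy : 0 < y) : 0 < x + y :=
  lt_of_lt_of_le hy (le_add_of_nonneg_left hx)

lemma v_zero (V : DVF K) : V.v 0 = ⊤ := (V.v_top_iff 0).mpr rfl

lemma v_one (V : DVF K) : V.v 1 = 0 := by
  have h := V.v_mul 1 1
  rw [mul_one] at h
  rcases eq_or_ne (V.v 1) ⊤ with ht | ht
  · exact absurd ((V.v_top_iff 1).mp ht) one_ne_zero
  · lift V.v 1 to ℤ using ht with n hn
    have hnn : n = n + n := by exact_mod_cast h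
    have : n = 0 := by omega
    simp [this]

lemma v_neg_one (V : DVF K) : V.v (-1) = 0 := by
  have h := V.v_mul (-1) (-1)
  rw [neg_mul_neg, one_mul, v_one] at h
  rcases eq_or_ne (V.v (-1)) ⊤ with ht | ht
  · rw [ht] at h; simp at h
  · lift V.v (-1) to ℤ using ht with n hn
    have hnn : (0 : ℤ) = n + n := by exact_mod_cast h
    have : n = 0 := by omega
    simp [this]

lemma v_neg (V : DVF K) (x : K) : V.v (-x) = V.v x := by
  have h := V.v_mul (-1) x
  rw [neg_one_mul, v_neg_one, zero_add] at h
  exact h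

lemma v_nat (V : DVF K) (n : ℕ) : 0 ≤ V.v (n : K) := by
  induction n with
  | zero => simp [v_zero]
  | succ n ih =>
    push_cast
    refine le_trans (le_min ih ?_) (V.v_add _ _)
    rw [v_one]

lemma v_int (V : DVF K) (n : ℤ) : 0 ≤ V.v (n : K) := by
  rcases Int.natAbs_eq n with h | h
  · rw [h, Int.cast_natCast]; exact v_nat V _
  · rw [h, Int.cast_neg, Int.cast_natCast, v_neg]; exact v_nat V _

lemma v_nat_unit (V : DVF K) {p m : ℕ} (hp : p.Prime) (hres : 0 < V.v (p : K))
    (hm : ¬ p ∣ m) : V.v (m : K) = 0 := by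
  have hcop : IsCoprime (p : ℤ) (m : ℤ) := by
    rw [Int.isCoprime_iff_gcd_eq_one, Int.gcd_natCast_natCast]
    exact (Nat.Prime.coprime_iff_not_dvd hp).mpr hm
  have h0 : 0 ≤ V.v (m : K) := v_nat V m
  rcases h0.lt_or_eq with hlt | heq
  · exfalso
    obtain ⟨u, w, huw⟩ := hcop
    have hK : (u : K) * (p : K) + (w : K) * (m : K) = 1 := by
      have := congrArg (fun z : ℤ => (z : K)) huw
      push_cast at this
      simpa using this
    have h1 : (0 : WithTop ℤ) < V.v 1 := by
      rw [← hK]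
      refine lt_of_lt_of_le (lt_min ?_ ?_) (V.v_add _ _)
      · rw [V.v_mul]; exact vpos_add' (v_int V u) hres
      · rw [V.v_mul]; exact vpos_add' (v_int V w) hlt
    rw [v_one] at h1
    exact lt_irrefl _ h1
  · exact heq.symm

/-- `x` is divisible by `a` within the valuation ring. -/
def divO (V : DVF K) (a x : K) : Prop := ∃ c : K, 0 ≤ V.v c ∧ x = a * c

lemma divO_zero (V : DVF K) (a : K) : divO V a 0 :=
  ⟨0, by simp [v_zero], (mul_zero a).symm⟩

lemma divO_mul (V : DVF K) {a x : K} (h : divO V a x) {y : K} (hy : 0 ≤ V.v y) :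
    divO V a (x * y) := by
  obtain ⟨c, hc, hx⟩ := h
  exact ⟨c * y, by rw [V.v_mul]; exact add_nonneg hc hy, by rw [hx, mul_assoc]⟩

lemma divO_add (V : DVF K) {a x y : K} (hx : divO V a x) (hy : divO V a y) :
    divO V a (x + y) := by
  obtain ⟨c, hc, hxc⟩ := hx
  obtain ⟨d, hd, hyd⟩ := hy
  exact ⟨c + d, le_trans (le_min hc hd) (V.v_add _ _), by rw [hxc, hyd, mul_add]⟩

lemma divO_neg (V : DVF K) {a x : K} (hx : divO V a x) : divO V a (-x) := by
  obtain ⟨c, hc, hxc⟩ := hx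
  exact ⟨-c, by rw [v_neg]; exact hc, by rw [hxc, mul_neg]⟩

lemma divO_sub (V : DVF K) {a x y : K} (hx : divO V a x) (hy : divO V a y) :
    divO V a (x - y) := by
  rw [sub_eq_add_neg]; exact divO_add V hx (divO_neg V hy)

lemma divO_sum (V : DVF K) {a : K} {ι : Type*} {s : Finset ι} {f : ι → K}
    (h : ∀ i ∈ s, divO V a (f i)) : divO V a (∑ i ∈ s, f i) :=
  Finset.sum_induction f (divO V a) (fun _ _ hx hy => divO_add V hx hy) (divO_zero V a) h

lemma v_sum_nonneg (V : DVF K) {ι : Type*} {s : Finset ι} {f : ι → K}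
    (h : ∀ i ∈ s, 0 ≤ V.v (f i)) : 0 ≤ V.v (∑ i ∈ s, f i) :=
  Finset.sum_induction f (fun x => 0 ≤ V.v x)
    (fun x y hx hy => le_trans (le_min hx hy) (V.v_add x y)) (by simp [v_zero]) h

lemma coeff_pow_eq_zero {f : PowerSeries K} (hf : PowerSeries.coeff 0 f = 0) :
    ∀ k n : ℕ, n < k → PowerSeries.coeff n (f ^ k) = 0 := by
  intro k
  induction k with
  | zero => intro n h; omega
  | succ k ih =>
    intro n h
    rw [pow_succ, PowerSeries.coeff_mul]
    apply Finset.sum_eq_zero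
    rintro ⟨u, w⟩ hmem
    rw [Finset.HasAntidiagonal.mem_antidiagonal] at hmem
    simp only at hmem ⊢
    rcases Nat.eq_zero_or_pos w with rfl | hw
    · rw [hf, mul_zero]
    · rw [ih u (by omega), zero_mul]

lemma coeff_pow_self {f : PowerSeries K} (hf : PowerSeries.coeff 0 f = 0) :
    ∀ k : ℕ, PowerSeries.coeff k (f ^ k) = (PowerSeries.coeff 1 f) ^ k := by
  intro k
  induction k with
  | zero => simp
  | succ k ih =>
    rw [pow_succ, PowerSeries.coeff_mul, Finset.sum_eq_single (k, 1)]
    · rw [ih, pow_succ]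
    · rintro ⟨u, w⟩ hmem hne
      rw [Finset.HasAntidiagonal.mem_antidiagonal] at hmem
      simp only at hmem ⊢
      by_cases hw0 : w = 0
      · subst hw0; rw [hf, mul_zero]
      · by_cases hw1 : w = 1
        · exfalso; apply hne; subst hw1
          have : u = k := by omega
          subst this; rfl
        · rw [coeff_pow_eq_zero hf k u (by omega), zero_mul]
    · intro hnot
      exact absurd (Finset.HasAntidiagonal.mem_antidiagonal.mpr (by omega)) hnot

lemma v_pow_nonneg (V : DVF K) {f : PowerSeries K}
    (hf : ∀ n, 0 ≤ V.v (PowerSeries.coeff n f)) :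
    ∀ k n : ℕ, 0 ≤ V.v (PowerSeries.coeff n (f ^ k)) := by
  intro k
  induction k with
  | zero =>
    intro n
    rw [pow_zero, PowerSeries.coeff_one]
    split
    · rw [v_one]
    · simp [v_zero]
  | succ k ih =>
    intro n
    rw [pow_succ, PowerSeries.coeff_mul]
    refine v_sum_nonneg V fun i _ => ?_
    rw [V.v_mul]
    exact add_nonneg (ih _) (hf _)



lemma fin2_eval0 (x y : ℕ) :
    (Finsupp.single (0 : Fin 2) x + Finsupp.single (1 : Fin 2) y) 0 = x := by
  rw [Finsupp.add_apply, Finsupp.single_eq_same,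
    Finsupp.single_eq_of_ne' (by decide : (1 : Fin 2) ≠ 0), add_zero]

lemma fin2_eval1 (x y : ℕ) :
    (Finsupp.single (0 : Fin 2) x + Finsupp.single (1 : Fin 2) y) 1 = y := by
  rw [Finsupp.add_apply, Finsupp.single_eq_of_ne' (by decide : (0 : Fin 2) ≠ 1),
    Finsupp.single_eq_same, zero_add]

lemma fin2_decomp (d : Fin 2 →₀ ℕ) :
    d = Finsupp.single 0 (d 0) + Finsupp.single 1 (d 1) := by
  ext i
  fin_cases i
  · exact (fin2_eval0 _ _).symm
  · exact (fin2_eval1 _ _).symm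

lemma sum_antidiagonal_fin2 (a b : ℕ) (h : (Fin 2 →₀ ℕ) → (Fin 2 →₀ ℕ) → K) :
    ∑ uv ∈ Finset.HasAntidiagonal.antidiagonal (Finsupp.single (0 : Fin 2) a + Finsupp.single 1 b),
      h uv.1 uv.2 =
    ∑ x ∈ Finset.HasAntidiagonal.antidiagonal a, ∑ y ∈ Finset.HasAntidiagonal.antidiagonal b,
      h (Finsupp.single 0 x.1 + Finsupp.single 1 y.1)
        (Finsupp.single 0 x.2 + Finsupp.single 1 y.2) := by
  rw [← Finset.sum_product']
  refine Finset.sum_nbij' (fun uv => ((uv.1 0, uv.2 0), (uv.1 1, uv.2 1)))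
    (fun xy => (Finsupp.single 0 xy.1.1 + Finsupp.single 1 xy.2.1,
      Finsupp.single 0 xy.1.2 + Finsupp.single 1 xy.2.2)) ?_ ?_ ?_ ?_ ?_
  · rintro ⟨u, w⟩ hm
    rw [Finset.HasAntidiagonal.mem_antidiagonal] at hm
    rw [Finset.mem_product, Finset.HasAntidiagonal.mem_antidiagonal, Finset.HasAntidiagonal.mem_antidiagonal]
    constructor
    · have h0 := DFunLike.congr_fun hm (0 : Fin 2)
      simp only [Finsupp.add_apply, Finsupp.single_eq_same,
        Finsupp.single_eq_of_ne' (show (1 : Fin 2) ≠ 0 by decide), add_zero] at h0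
      simpa using h0
    · have h1 := DFunLike.congr_fun hm (1 : Fin 2)
      simp only [Finsupp.add_apply, Finsupp.single_eq_same,
        Finsupp.single_eq_of_ne' (show (0 : Fin 2) ≠ 1 by decide), zero_add] at h1
      simpa using h1
  · rintro ⟨⟨x1, x2⟩, ⟨y1, y2⟩⟩ hm
    rw [Finset.mem_product, Finset.HasAntidiagonal.mem_antidiagonal, Finset.HasAntidiagonal.mem_antidiagonal] at hm
    rw [Finset.HasAntidiagonal.mem_antidiagonal]
    obtain ⟨hx, hy⟩ := hm
    simp only
    rw [← hx, ← hy, Finsupp.single_add, Finsupp.single_add]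
    abel
  · rintro ⟨u, w⟩ _
    simp only
    rw [← fin2_decomp, ← fin2_decomp]
  · rintro ⟨⟨x1, x2⟩, ⟨y1, y2⟩⟩ _
    simp only
    rw [fin2_eval0, fin2_eval0, fin2_eval1, fin2_eval1]
  · rintro ⟨u, w⟩ _
    simp only
    rw [← fin2_decomp, ← fin2_decomp]

lemma mv_coeff_mul_X (P Q : MvPowerSeries (Fin 2) K) (a : ℕ) :
    MvPowerSeries.coeff (Finsupp.single 0 a) (P * Q) =
    ∑ x ∈ Finset.HasAntidiagonal.antidiagonal a, MvPowerSeries.coeff (Finsupp.single 0 x.1) P *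
      MvPowerSeries.coeff (Finsupp.single 0 x.2) Q := by
  have h := sum_antidiagonal_fin2 a 0
    (fun u w => MvPowerSeries.coeff u P * MvPowerSeries.coeff w Q)
  rw [Finsupp.single_zero, add_zero] at h
  rw [MvPowerSeries.coeff_mul, h]
  refine Finset.sum_congr rfl fun x _ => ?_
  rw [Finset.Nat.antidiagonal_zero, Finset.sum_singleton]
  simp

lemma mv_coeff_mul_XY (P Q : MvPowerSeries (Fin 2) K) (a : ℕ) :
    MvPowerSeries.coeff (Finsupp.single 0 a + Finsupp.single 1 1) (P * Q) =
    ∑ x ∈ Finset.HasAntidiagonal.antidiagonal a,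
      (MvPowerSeries.coeff (Finsupp.single 0 x.1 + Finsupp.single 1 1) P *
          MvPowerSeries.coeff (Finsupp.single 0 x.2) Q
        + MvPowerSeries.coeff (Finsupp.single 0 x.1) P *
          MvPowerSeries.coeff (Finsupp.single 0 x.2 + Finsupp.single 1 1) Q) := by
  rw [MvPowerSeries.coeff_mul, sum_antidiagonal_fin2 a 1
    (fun u w => MvPowerSeries.coeff u P * MvPowerSeries.coeff w Q)]
  refine Finset.sum_congr rfl fun x _ => ?_
  rw [Finset.Nat.sum_antidiagonal_eq_sum_range_succ_mk, Finset.sum_range_succ,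
    Finset.sum_range_succ, Finset.sum_range_zero, zero_add]
  norm_num [Finsupp.single_zero]
  ring

/-- The series `F(X,0)`. -/
noncomputable def fX (F : MvPowerSeries (Fin 2) K) : PowerSeries K :=
  PowerSeries.mk fun a => MvPowerSeries.coeff (Finsupp.single 0 a) F

/-- The series `(∂F/∂Y)(X,0)`. -/
noncomputable def gX (F : MvPowerSeries (Fin 2) K) : PowerSeries K :=
  PowerSeries.mk fun a =>
    MvPowerSeries.coeff (Finsupp.single 0 a + Finsupp.single 1 1) F

lemma partA (F : MvPowerSeries (Fin 2) K) :
    ∀ k a : ℕ, MvPowerSeries.coeff (Finsupp.single 0 a) (F ^ k) =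
      PowerSeries.coeff a (fX F ^ k) := by
  intro k
  induction k with
  | zero =>
    intro a
    rw [pow_zero, pow_zero, MvPowerSeries.coeff_one, PowerSeries.coeff_one]
    simp [Finsupp.single_eq_zero]
  | succ k ih =>
    intro a
    rw [pow_succ, pow_succ, mv_coeff_mul_X, PowerSeries.coeff_mul]
    refine Finset.sum_congr rfl fun x _ => ?_
    rw [ih]
    simp [fX]

lemma partB (F : MvPowerSeries (Fin 2) K) :
    ∀ k a : ℕ, MvPowerSeries.coeff (Finsupp.single 0 a + Finsupp.single 1 1) (F ^ (k + 1)) =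
      ((k + 1 : ℕ) : K) * PowerSeries.coeff a (fX F ^ k * gX F) := by
  intro k
  induction k with
  | zero =>
    intro a
    rw [pow_one, pow_zero, one_mul]
    simp [gX]
  | succ k ih =>
    intro a
    rw [pow_succ, mv_coeff_mul_XY, Finset.sum_add_distrib]
    have e1 : ∀ x ∈ Finset.HasAntidiagonal.antidiagonal a,
        MvPowerSeries.coeff (Finsupp.single 0 x.1 + Finsupp.single 1 1) (F ^ (k + 1)) *
          MvPowerSeries.coeff (Finsupp.single 0 x.2) F
        = ((k + 1 : ℕ) : K) * (PowerSeries.coeff x.1 (fX F ^ k * gX F) *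
            PowerSeries.coeff x.2 (fX F)) := by
      intro x _
      rw [ih]
      simp only [fX, PowerSeries.coeff_mk]
      ring
    have e2 : ∀ x ∈ Finset.HasAntidiagonal.antidiagonal a,
        MvPowerSeries.coeff (Finsupp.single 0 x.1) (F ^ (k + 1)) *
          MvPowerSeries.coeff (Finsupp.single 0 x.2 + Finsupp.single 1 1) F
        = PowerSeries.coeff x.1 (fX F ^ (k + 1)) * PowerSeries.coeff x.2 (gX F) := by
      intro x _
      rw [partA]
      simp [gX]
    rw [Finset.sum_congr rfl e1, Finset.sum_congr rfl e2, ← Finset.mul_sum,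
      ← PowerSeries.coeff_mul, ← PowerSeries.coeff_mul]
    have hcomm : fX F ^ k * gX F * fX F = fX F ^ (k + 1) * gX F := by ring
    rw [hcomm]
    push_cast
    ring


/-- Partial "derivative composed with `ff`" coefficient sums. -/
noncomputable def Sser (φf ff : PowerSeries K) (j : ℕ) : K :=
  ∑ k ∈ Finset.range (j + 1),
    ((k + 1 : ℕ) : K) * PowerSeries.coeff (k + 1) φf * PowerSeries.coeff j (ff ^ k)

lemma S_trunc (φf ff : PowerSeries K) (hf0 : PowerSeries.coeff 0 ff = 0) {j n : ℕ}
    (hjn : j < n) :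
    ∑ k ∈ Finset.range n, ((k + 1 : ℕ) : K) * PowerSeries.coeff (k + 1) φf *
      PowerSeries.coeff j (ff ^ k) = Sser φf ff j := by
  rw [Sser]
  refine (Finset.sum_subset (Finset.range_subset_range.mpr (by omega)) fun k hk hk' => ?_).symm
  rw [coeff_pow_eq_zero hf0 k j (by simp only [Finset.mem_range, not_lt] at hk'; omega),
    mul_zero]

end Stmt1Aux

open Stmt1Aux

/-- Lemma 2.1 (ii). Let `K` be a complete discrete valuation field of
characteristic 0 with perfect residue field of characteristic `p > 0`, and let
`φ(T) = a₁T + a₂T² + ⋯` be an isogeny of formal groups over `O_K` of height 1.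
Then for every `m` with `p ∤ m`, the coefficient `a₁` divides `a_m` in `O_K`. -/
theorem stmt1 (p : ℕ) (hp : p.Prime) (K : Type) [Field K] [CharZero K]
    (V : DVF K) (hcomp : V.IsComplete) (hres : 0 < V.v (p : K))
    (hperf : V.ResiduePerfect p)
    (Fg Gg : FGL K V) (φ : Isog V Fg Gg) (hht : HasHeight V p 1 φ.φ)
    (m : ℕ) (hm : ¬ p ∣ m) :
    ∃ c : K, 0 ≤ V.v c ∧
      PowerSeries.coeff m φ.φ = PowerSeries.coeff 1 φ.φ * c := by
  classical
  have hm1 : m ≠ 0 := fun h => hm (by simp [h])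
  have hf0 : PowerSeries.coeff 0 (fX Fg.F) = 0 := by
    simp only [fX, PowerSeries.coeff_mk, Finsupp.single_zero]
    exact Fg.const
  have hf1 : PowerSeries.coeff 1 (fX Fg.F) = 1 := by
    simp only [fX, PowerSeries.coeff_mk]
    exact Fg.linX
  have hg0 : PowerSeries.coeff 0 (gX Fg.F) = 1 := by
    simp only [gX, PowerSeries.coeff_mk, Finsupp.single_zero, zero_add]
    exact Fg.linY
  have hfint : ∀ n, 0 ≤ V.v (PowerSeries.coeff n (fX Fg.F)) := fun n => by
    simp only [fX, PowerSeries.coeff_mk]; exact Fg.int_coeff _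
  have hgint : ∀ n, 0 ≤ V.v (PowerSeries.coeff n (gX Fg.F)) := fun n => by
    simp only [gX, PowerSeries.coeff_mk]; exact Fg.int_coeff _
  -- Key identity: `φ'(X)·(∂F/∂Y)(X,0) = a₁·(∂G/∂Y)(φ(X),0)`, coefficientwise.
  have key : ∀ i : ℕ, divO V (PowerSeries.coeff 1 φ.φ)
      (∑ k ∈ Finset.range (i + 1),
        Sser φ.φ (fX Fg.F) k * PowerSeries.coeff (i - k) (gX Fg.F)) := by
    intro i
    have hom := φ.hom i 1
    have hL : (∑ k ∈ Finset.range (i + 1 + 1), PowerSeries.coeff k φ.φ *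
          MvPowerSeries.coeff (Finsupp.single 0 i + Finsupp.single 1 1) (Fg.F ^ k))
        = ∑ k ∈ Finset.range (i + 1),
            Sser φ.φ (fX Fg.F) k * PowerSeries.coeff (i - k) (gX Fg.F) := by
      rw [Finset.sum_range_succ', φ.const, zero_mul, add_zero]
      have e1 : ∀ k ∈ Finset.range (i + 1),
          PowerSeries.coeff (k + 1) φ.φ *
            MvPowerSeries.coeff (Finsupp.single 0 i + Finsupp.single 1 1) (Fg.F ^ (k + 1))
          = ∑ x ∈ Finset.HasAntidiagonal.antidiagonal i,
              ((k + 1 : ℕ) : K) * PowerSeries.coeff (k + 1) φ.φ *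
                (PowerSeries.coeff x.1 (fX Fg.F ^ k) * PowerSeries.coeff x.2 (gX Fg.F)) := by
        intro k _
        rw [partB, PowerSeries.coeff_mul, Finset.mul_sum, Finset.mul_sum]
        refine Finset.sum_congr rfl fun x _ => by ring
      rw [Finset.sum_congr rfl e1, Finset.sum_comm]
      have e2 : ∀ x ∈ Finset.HasAntidiagonal.antidiagonal i,
          (∑ k ∈ Finset.range (i + 1), ((k + 1 : ℕ) : K) * PowerSeries.coeff (k + 1) φ.φ *
            (PowerSeries.coeff x.1 (fX Fg.F ^ k) * PowerSeries.coeff x.2 (gX Fg.F)))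
          = Sser φ.φ (fX Fg.F) x.1 * PowerSeries.coeff x.2 (gX Fg.F) := by
        intro x hx
        rw [Finset.HasAntidiagonal.mem_antidiagonal] at hx
        have e3 : ∀ k ∈ Finset.range (i + 1),
            ((k + 1 : ℕ) : K) * PowerSeries.coeff (k + 1) φ.φ *
              (PowerSeries.coeff x.1 (fX Fg.F ^ k) * PowerSeries.coeff x.2 (gX Fg.F))
            = ((k + 1 : ℕ) : K) * PowerSeries.coeff (k + 1) φ.φ *
                PowerSeries.coeff x.1 (fX Fg.F ^ k) * PowerSeries.coeff x.2 (gX Fg.F) :=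
          fun k _ => by ring
        rw [Finset.sum_congr rfl e3, ← Finset.sum_mul,
          S_trunc φ.φ (fX Fg.F) hf0 (show x.1 < i + 1 by omega)]
      rw [Finset.sum_congr rfl e2, Finset.Nat.sum_antidiagonal_eq_sum_range_succ_mk]
    have hR : (∑ k ∈ Finset.range (i + 1 + 1), ∑ l ∈ Finset.range (i + 1 + 1),
        MvPowerSeries.coeff (Finsupp.single 0 k + Finsupp.single 1 l) Gg.F *
          PowerSeries.coeff i (φ.φ ^ k) * PowerSeries.coeff 1 (φ.φ ^ l))
        = PowerSeries.coeff 1 φ.φ * ∑ k ∈ Finset.range (i + 1 + 1),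
            MvPowerSeries.coeff (Finsupp.single 0 k + Finsupp.single 1 1) Gg.F *
              PowerSeries.coeff i (φ.φ ^ k) := by
      rw [Finset.mul_sum]
      refine Finset.sum_congr rfl fun k _ => ?_
      rw [Finset.sum_eq_single 1]
      · rw [pow_one]; ring
      · intro l _ hne
        rcases Nat.eq_zero_or_pos l with rfl | hl1
        · rw [pow_zero, PowerSeries.coeff_one]
          simp
        · rw [coeff_pow_eq_zero φ.const l 1 (by omega), mul_zero]
      · intro hnot
        exact absurd (Finset.mem_range.mpr (by omega)) hnot
    refine ⟨∑ k ∈ Finset.range (i + 1 + 1),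
      MvPowerSeries.coeff (Finsupp.single 0 k + Finsupp.single 1 1) Gg.F *
        PowerSeries.coeff i (φ.φ ^ k), ?_, ?_⟩
    · refine v_sum_nonneg V fun k _ => ?_
      rw [V.v_mul]
      exact add_nonneg (Gg.int_coeff _) (v_pow_nonneg V φ.int_coeff k i)
    · rw [← hL, hom, hR]
  -- Strong induction: `a₁` divides `n·aₙ` for all `n`.
  have main : ∀ n : ℕ, divO V (PowerSeries.coeff 1 φ.φ)
      ((n : K) * PowerSeries.coeff n φ.φ) := by
    intro n
    induction n using Nat.strong_induction_on with
    | _ n ih =>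
      rcases Nat.eq_zero_or_pos n with rfl | hn
      · simp only [Nat.cast_zero, zero_mul]
        exact divO_zero V _
      · obtain ⟨i, rfl⟩ : ∃ i, n = i + 1 := ⟨n - 1, by omega⟩
        have Sdiv : ∀ j, j < i → divO V (PowerSeries.coeff 1 φ.φ)
            (Sser φ.φ (fX Fg.F) j) := by
          intro j hj
          rw [Sser]
          refine divO_sum V fun k hk => ?_
          rw [Finset.mem_range] at hk
          exact divO_mul V (ih (k + 1) (by omega)) (v_pow_nonneg V hfint k j)
        have hSi : divO V (PowerSeries.coeff 1 φ.φ) (Sser φ.φ (fX Fg.F) i) := by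
          have hsplit : ∑ k ∈ Finset.range (i + 1),
              Sser φ.φ (fX Fg.F) k * PowerSeries.coeff (i - k) (gX Fg.F)
              = (∑ k ∈ Finset.range i,
                  Sser φ.φ (fX Fg.F) k * PowerSeries.coeff (i - k) (gX Fg.F))
                + Sser φ.φ (fX Fg.F) i := by
            rw [Finset.sum_range_succ, Nat.sub_self, hg0, mul_one]
          have heq : Sser φ.φ (fX Fg.F) i
              = (∑ k ∈ Finset.range (i + 1),
                  Sser φ.φ (fX Fg.F) k * PowerSeries.coeff (i - k) (gX Fg.F))
                - (∑ k ∈ Finset.range i,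
                  Sser φ.φ (fX Fg.F) k * PowerSeries.coeff (i - k) (gX Fg.F)) := by
            rw [hsplit]; ring
          rw [heq]
          refine divO_sub V (key i) (divO_sum V fun k hk => ?_)
          rw [Finset.mem_range] at hk
          exact divO_mul V (Sdiv k hk) (hgint _)
        have hsplit2 : Sser φ.φ (fX Fg.F) i
            = (∑ k ∈ Finset.range i, ((k + 1 : ℕ) : K) * PowerSeries.coeff (k + 1) φ.φ *
                PowerSeries.coeff i (fX Fg.F ^ k))
              + ((i + 1 : ℕ) : K) * PowerSeries.coeff (i + 1) φ.φ := by
          rw [Sser, Finset.sum_range_succ, coeff_pow_self hf0, hf1, one_pow, mul_one]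
        have heq2 : ((i + 1 : ℕ) : K) * PowerSeries.coeff (i + 1) φ.φ
            = Sser φ.φ (fX Fg.F) i
              - ∑ k ∈ Finset.range i, ((k + 1 : ℕ) : K) * PowerSeries.coeff (k + 1) φ.φ *
                  PowerSeries.coeff i (fX Fg.F ^ k) := by
          rw [hsplit2]; ring
        rw [heq2]
        refine divO_sub V hSi (divO_sum V fun k hk => ?_)
        rw [Finset.mem_range] at hk
        exact divO_mul V (ih (k + 1) (by omega)) (v_pow_nonneg V hfint k i)
  obtain ⟨d, hd, hmd⟩ := main m
  have hmne : (m : K) ≠ 0 := Nat.cast_ne_zero.mpr hm1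
  have hmK : V.v ((m : K)) = 0 := v_nat_unit V hp hres hm
  refine ⟨(m : K)⁻¹ * d, ?_, ?_⟩
  · rw [V.v_mul]
    refine add_nonneg ?_ hd
    have hinv : V.v ((m : K)⁻¹) = 0 := by
      have h1 := V.v_mul (m : K) ((m : K)⁻¹)
      rw [mul_inv_cancel₀ hmne, v_one, hmK, zero_add] at h1
      exact h1.symm
    rw [hinv]
  · have hcoe : PowerSeries.coeff m φ.φ
        = (m : K)⁻¹ * ((m : K) * PowerSeries.coeff m φ.φ) := by
      rw [← mul_assoc, inv_mul_cancel₀ hmne, one_mul]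
    rw [hcoe, hmd]
    ring
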